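/- Let ρ be a state on ℂ² ⊗ ℂ^n with blocks ρ_{ij} for i, j ∈ {0,1} (the n×n matrices (ρ_{ij})_{kl} = ρ_{(i,k),(j,l)}), and let Π[ρ] = E_{00} ⊗ ρ_{00} + E_{11} ⊗ ρ_{11} be its block-diagonal part. Then Σ_{i,j∈{0,1}} ‖ρ_{ij}‖₁ = 1 + ‖ρ − Π[ρ]‖₁. Consequently, the one-sided negativity of quantumness of ρ equals Q_N^A(ρ) = inf over 2×2 unitaries U of (1/2)‖ρ − Π_U[ρ]‖₁, where Π_U[ρ] = Σ_{i∈{0,1}} (U E_{ii} U† ⊗ I) ρ (U E_{ii} U† ⊗ I). -/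

import Mathlib

open scoped Kronecker ComplexOrder
open Matrix

/-- The positive semidefinite square root, as `Matrix.PosSemidef.sqrt` was defined in older Mathlib. -/
noncomputable def psdSqrtOld {ι : Type*} [Fintype ι] [DecidableEq ι] {A : Matrix ι ι ℂ}
    (hA : A.PosSemidef) : Matrix ι ι ℂ :=
  (hA.1.eigenvectorUnitary : Matrix ι ι ℂ) * diagonal ((↑) ∘ (√·) ∘ hA.1.eigenvalues) *
    (star hA.1.eigenvectorUnitary : Matrix ι ι ℂ)

noncomputable def traceNorm {ι : Type*} [Fintype ι] [DecidableEq ι] (A : Matrix ι ι ℂ) : ℝ :=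
  ((psdSqrtOld (Matrix.posSemidef_conjTranspose_mul_self A)).trace).re

noncomputable def l1Norm {ι κ : Type*} [Fintype ι] [Fintype κ] (A : Matrix ι κ ℂ) : ℝ :=
  ∑ i, ∑ j, ‖A i j‖

def ptranspose {α β : Type*} (ρ : Matrix (α × β) (α × β) ℂ) : Matrix (α × β) (α × β) ℂ :=
  Matrix.of fun p q => ρ (p.1, q.2) (q.1, p.2)

noncomputable def negativity {α β : Type*} [Fintype α] [Fintype β] [DecidableEq α] [DecidableEq β]
    (ρ : Matrix (α × β) (α × β) ℂ) : ℝ :=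
  (traceNorm (ptranspose ρ) - 1) / 2

def matUnit {ι : Type*} [DecidableEq ι] (i j : ι) : Matrix ι ι ℂ :=
  Matrix.single i j 1

noncomputable def mcs {n : ℕ} (t : Fin n → Fin n → ℂ) :
    Matrix (Fin n × Fin n) (Fin n × Fin n) ℂ :=
  ∑ i, ∑ j, t i j • (matUnit i j ⊗ₖ matUnit i j)

def blockOf {m n : ℕ} (ρ : Matrix (Fin m × Fin n) (Fin m × Fin n) ℂ) (i j : Fin m) :
    Matrix (Fin n) (Fin n) ℂ :=
  Matrix.of fun k l => ρ (i, k) (j, l)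

noncomputable def conjU {m n : ℕ} (U : Matrix.unitaryGroup (Fin m) ℂ)
    (ρ : Matrix (Fin m × Fin n) (Fin m × Fin n) ℂ) : Matrix (Fin m × Fin n) (Fin m × Fin n) ℂ :=
  ((U : Matrix (Fin m) (Fin m) ℂ) ⊗ₖ (1 : Matrix (Fin n) (Fin n) ℂ))ᴴ * ρ *
    ((U : Matrix (Fin m) (Fin m) ℂ) ⊗ₖ (1 : Matrix (Fin n) (Fin n) ℂ))

noncomputable def conjUV {m n : ℕ} (U : Matrix.unitaryGroup (Fin m) ℂ)
    (V : Matrix.unitaryGroup (Fin n) ℂ)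
    (ρ : Matrix (Fin m × Fin n) (Fin m × Fin n) ℂ) : Matrix (Fin m × Fin n) (Fin m × Fin n) ℂ :=
  ((U : Matrix (Fin m) (Fin m) ℂ) ⊗ₖ (V : Matrix (Fin n) (Fin n) ℂ))ᴴ * ρ *
    ((U : Matrix (Fin m) (Fin m) ℂ) ⊗ₖ (V : Matrix (Fin n) (Fin n) ℂ))

noncomputable def QNA {m n : ℕ} (ρ : Matrix (Fin m × Fin n) (Fin m × Fin n) ℂ) : ℝ :=
  ⨅ U : Matrix.unitaryGroup (Fin m) ℂ,
    ((∑ i, ∑ j, traceNorm (blockOf (conjU U ρ) i j)) - 1) / 2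

noncomputable def QNAB {m n : ℕ} (ρ : Matrix (Fin m × Fin n) (Fin m × Fin n) ℂ) : ℝ :=
  ⨅ U : Matrix.unitaryGroup (Fin m) ℂ, ⨅ V : Matrix.unitaryGroup (Fin n) ℂ,
    (l1Norm (conjUV U V ρ) - 1) / 2

/-- Local dephasing of the qubit in the basis `{U e_0, U e_1}`:
`Π_U[ρ] = Σ_i (U E_{ii} U† ⊗ I) ρ (U E_{ii} U† ⊗ I)`. -/
noncomputable def dephase {n : ℕ} (U : Matrix.unitaryGroup (Fin 2) ℂ)
    (ρ : Matrix (Fin 2 × Fin n) (Fin 2 × Fin n) ℂ) :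
    Matrix (Fin 2 × Fin n) (Fin 2 × Fin n) ℂ :=
  ∑ i : Fin 2,
    (((U : Matrix (Fin 2) (Fin 2) ℂ) * matUnit i i * (U : Matrix (Fin 2) (Fin 2) ℂ)ᴴ)
        ⊗ₖ (1 : Matrix (Fin n) (Fin n) ℂ)) * ρ *
      (((U : Matrix (Fin 2) (Fin 2) ℂ) * matUnit i i * (U : Matrix (Fin 2) (Fin 2) ℂ)ᴴ)
        ⊗ₖ (1 : Matrix (Fin n) (Fin n) ℂ))
section sqrtOld
open scoped MatrixOrder
variable {ι : Type*} [Fintype ι] [DecidableEq ι]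
lemma psdSqrtOld_eq_cfc {A : Matrix ι ι ℂ} (hA : A.PosSemidef) : psdSqrtOld hA = CFC.sqrt A := by
  rw [CFC.sqrt_eq_cfc, cfc_nnreal_eq_real _ A, hA.1.cfc_eq]
  simp only [IsHermitian.cfc, Unitary.conjStarAlgAut_apply, psdSqrtOld]
  congr 3
  funext i
  simp [Real.coe_sqrt, Real.coe_toNNReal', max_eq_left (hA.eigenvalues_nonneg i)]
lemma Matrix.PosSemidef.posSemidef_sqrtOld {A : Matrix ι ι ℂ} (hA : A.PosSemidef) :
    (psdSqrtOld hA).PosSemidef := by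
  rw [psdSqrtOld_eq_cfc]; exact (CFC.sqrt_nonneg A).posSemidef
lemma Matrix.PosSemidef.sqrtOld_mul_self {A : Matrix ι ι ℂ} (hA : A.PosSemidef) :
    psdSqrtOld hA * psdSqrtOld hA = A := by
  rw [psdSqrtOld_eq_cfc]; exact CFC.sqrt_mul_sqrt_self A hA.nonneg
lemma Matrix.PosSemidef.eq_sqrtOld_of_sq_eq {A : Matrix ι ι ℂ} (hA : A.PosSemidef)
    {B : Matrix ι ι ℂ} (hB : B.PosSemidef) (h : A ^ 2 = B) : A = psdSqrtOld hB := by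
  rw [psdSqrtOld_eq_cfc]
  exact (CFC.sqrt_unique (by rw [← pow_two, h]) hA.nonneg).symm
end sqrtOld
section helpers

variable {ι : Type*} [Fintype ι] [DecidableEq ι]

lemma traceNorm_of_posSemidef {A : Matrix ι ι ℂ} (hA : A.PosSemidef) :
    traceNorm A = A.trace.re := by
  unfold traceNorm
  rw [← hA.eq_sqrtOld_of_sq_eq (Matrix.posSemidef_conjTranspose_mul_self A)
    (by rw [pow_two, hA.1.eq])]

lemma conj_mul_conj (W X Y : Matrix ι ι ℂ) (h1 : Wᴴ * W = 1) :
    (W * X * Wᴴ) * (W * Y * Wᴴ) = W * (X * Y) * Wᴴ := by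
  simp only [Matrix.mul_assoc]
  rw [show Wᴴ * (W * (Y * Wᴴ)) = Y * Wᴴ by rw [← Matrix.mul_assoc, h1, Matrix.one_mul]]

lemma traceNorm_conj (A W : Matrix ι ι ℂ) (h1 : Wᴴ * W = 1) :
    traceNorm (W * A * Wᴴ) = traceNorm A := by
  have hpsd := Matrix.posSemidef_conjTranspose_mul_self A
  have hSpsd := hpsd.posSemidef_sqrtOld
  set S := psdSqrtOld hpsd with hS
  have key : W * S * Wᴴ = psdSqrtOld (Matrix.posSemidef_conjTranspose_mul_self (W * A * Wᴴ)) := by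
    refine (hSpsd.mul_mul_conjTranspose_same W).eq_sqrtOld_of_sq_eq _ ?_
    have hct : (W * A * Wᴴ)ᴴ = W * Aᴴ * Wᴴ := by
      rw [Matrix.conjTranspose_mul, Matrix.conjTranspose_mul,
        Matrix.conjTranspose_conjTranspose, Matrix.mul_assoc]
    rw [pow_two, conj_mul_conj W S S h1, hpsd.sqrtOld_mul_self, hct, conj_mul_conj W Aᴴ A h1]
  unfold traceNorm
  rw [← key, Matrix.trace_mul_comm, ← Matrix.mul_assoc, h1, Matrix.one_mul]

lemma kron_conjTranspose {m n : ℕ} (X : Matrix (Fin m) (Fin m) ℂ) (Y : Matrix (Fin n) (Fin n) ℂ) :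
    (X ⊗ₖ Y)ᴴ = Xᴴ ⊗ₖ Yᴴ := by
  ext ⟨a, k⟩ ⟨b, l⟩
  simp [Matrix.conjTranspose_apply, Matrix.kroneckerMap_apply, star_mul']

lemma matUnit_conjTranspose (i j : ι) : (matUnit i j)ᴴ = matUnit j i := by
  ext a b
  simp [matUnit, Matrix.single, Matrix.conjTranspose_apply, apply_ite (star : ℂ → ℂ),
    and_comm]

lemma matUnit_trace (i : ι) : (matUnit i i).trace = 1 := by
  simp [matUnit, Matrix.trace, Matrix.diag, Matrix.single]

end helpers
section helpers2

lemma matUnit_mul_same (i j k : Fin 2) :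
    matUnit i j * matUnit j k = matUnit i k := by
  simp [matUnit, Matrix.single_mul_single_same]

lemma matUnit_mul_ne {j k : Fin 2} (h : j ≠ k) (i l : Fin 2) :
    matUnit i j * matUnit k l = 0 := by
  simp [matUnit, Matrix.single_mul_single_of_ne, h]

lemma psd_blockdiag {n : ℕ} {P Q : Matrix (Fin n) (Fin n) ℂ} (hP : P.PosSemidef)
    (hQ : Q.PosSemidef) :
    (matUnit (0 : Fin 2) 0 ⊗ₖ P + matUnit (1 : Fin 2) 1 ⊗ₖ Q).PosSemidef := by
  refine Matrix.PosSemidef.of_dotProduct_mulVec_nonneg ?_ ?_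
  · rw [Matrix.IsHermitian, Matrix.conjTranspose_add, kron_conjTranspose, kron_conjTranspose,
      matUnit_conjTranspose, matUnit_conjTranspose, hP.1.eq, hQ.1.eq]
  · intro x
    have hx : dotProduct (star x)
        ((matUnit (0 : Fin 2) 0 ⊗ₖ P + matUnit (1 : Fin 2) 1 ⊗ₖ Q) *ᵥ x)
        = dotProduct (star fun k => x (0, k)) (P *ᵥ fun k => x (0, k))
          + dotProduct (star fun k => x (1, k)) (Q *ᵥ fun k => x (1, k)) := by
      simp [dotProduct, Matrix.mulVec, Fintype.sum_prod_type, Fin.sum_univ_two,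
        matUnit, Matrix.single, Finset.mul_sum, Finset.sum_add_distrib, mul_assoc]
    rw [hx]
    exact add_nonneg (hP.dotProduct_mulVec_nonneg _) (hQ.dotProduct_mulVec_nonneg _)

lemma sq_blockdiag {n : ℕ} (P Q : Matrix (Fin n) (Fin n) ℂ) :
    (matUnit (0 : Fin 2) 0 ⊗ₖ P + matUnit (1 : Fin 2) 1 ⊗ₖ Q) ^ 2
      = matUnit (0 : Fin 2) 0 ⊗ₖ (P * P) + matUnit (1 : Fin 2) 1 ⊗ₖ (Q * Q) := by
  rw [pow_two, Matrix.add_mul, Matrix.mul_add, Matrix.mul_add, ← Matrix.mul_kronecker_mul,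
    ← Matrix.mul_kronecker_mul, ← Matrix.mul_kronecker_mul, ← Matrix.mul_kronecker_mul,
    matUnit_mul_same, matUnit_mul_same, matUnit_mul_ne (by decide), matUnit_mul_ne (by decide),
    Matrix.zero_kronecker, Matrix.zero_kronecker]
  abel

lemma trace_blockdiag {n : ℕ} (P Q : Matrix (Fin n) (Fin n) ℂ) :
    (matUnit (0 : Fin 2) 0 ⊗ₖ P + matUnit (1 : Fin 2) 1 ⊗ₖ Q).trace = P.trace + Q.trace := by
  rw [Matrix.trace_add, Matrix.trace_kronecker, Matrix.trace_kronecker, matUnit_trace,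
    matUnit_trace, one_mul, one_mul]

lemma traceNorm_blockdiag {n : ℕ} {P Q : Matrix (Fin n) (Fin n) ℂ} (hP : P.PosSemidef)
    (hQ : Q.PosSemidef) :
    traceNorm (matUnit (0 : Fin 2) 0 ⊗ₖ P + matUnit (1 : Fin 2) 1 ⊗ₖ Q)
      = traceNorm P + traceNorm Q := by
  rw [traceNorm_of_posSemidef (psd_blockdiag hP hQ), traceNorm_of_posSemidef hP,
    traceNorm_of_posSemidef hQ, trace_blockdiag, Complex.add_re]

lemma traceNorm_offdiag {n : ℕ} (A B : Matrix (Fin n) (Fin n) ℂ) :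
    traceNorm (matUnit (0 : Fin 2) 1 ⊗ₖ A + matUnit (1 : Fin 2) 0 ⊗ₖ B)
      = traceNorm A + traceNorm B := by
  set M := matUnit (0 : Fin 2) 1 ⊗ₖ A + matUnit (1 : Fin 2) 0 ⊗ₖ B with hMdef
  have hA := Matrix.posSemidef_conjTranspose_mul_self A
  have hB := Matrix.posSemidef_conjTranspose_mul_self B
  have hMM : Mᴴ * M = matUnit (0 : Fin 2) 0 ⊗ₖ (Bᴴ * B) + matUnit (1 : Fin 2) 1 ⊗ₖ (Aᴴ * A) := by
    rw [hMdef, Matrix.conjTranspose_add, kron_conjTranspose, kron_conjTranspose,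
      matUnit_conjTranspose, matUnit_conjTranspose, Matrix.add_mul, Matrix.mul_add,
      Matrix.mul_add, ← Matrix.mul_kronecker_mul, ← Matrix.mul_kronecker_mul,
      ← Matrix.mul_kronecker_mul, ← Matrix.mul_kronecker_mul, matUnit_mul_same, matUnit_mul_same,
      matUnit_mul_ne (by decide), matUnit_mul_ne (by decide), Matrix.zero_kronecker,
      Matrix.zero_kronecker]
    abel
  have hsqrt : psdSqrtOld (Matrix.posSemidef_conjTranspose_mul_self M)
      = matUnit (0 : Fin 2) 0 ⊗ₖ psdSqrtOld hB + matUnit (1 : Fin 2) 1 ⊗ₖ psdSqrtOld hA := by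
    refine ((psd_blockdiag hB.posSemidef_sqrtOld hA.posSemidef_sqrtOld).eq_sqrtOld_of_sq_eq
      (Matrix.posSemidef_conjTranspose_mul_self M) ?_).symm
    rw [sq_blockdiag, hB.sqrtOld_mul_self, hA.sqrtOld_mul_self, hMM]
  unfold traceNorm
  rw [hsqrt, trace_blockdiag, Complex.add_re, add_comm]
section helpers3

lemma blockOf_psd {n : ℕ} {ρ : Matrix (Fin 2 × Fin n) (Fin 2 × Fin n) ℂ} (h : ρ.PosSemidef)
    (i : Fin 2) : (blockOf ρ i i).PosSemidef :=
  h.submatrix (fun k => (i, k))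

lemma trace_blocks {n : ℕ} (ρ : Matrix (Fin 2 × Fin n) (Fin 2 × Fin n) ℂ) :
    (blockOf ρ 0 0).trace + (blockOf ρ 1 1).trace = ρ.trace := by
  simp [Matrix.trace, Matrix.diag, blockOf, Fintype.sum_prod_type, Fin.sum_univ_two]

lemma decomp {n : ℕ} (ρ : Matrix (Fin 2 × Fin n) (Fin 2 × Fin n) ℂ) :
    ρ - (matUnit (0 : Fin 2) 0 ⊗ₖ blockOf ρ 0 0 + matUnit (1 : Fin 2) 1 ⊗ₖ blockOf ρ 1 1)
      = matUnit (0 : Fin 2) 1 ⊗ₖ blockOf ρ 0 1 + matUnit (1 : Fin 2) 0 ⊗ₖ blockOf ρ 1 0 := by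
  ext ⟨a, k⟩ ⟨b, l⟩
  fin_cases a <;> fin_cases b <;>
    simp [blockOf, matUnit, Matrix.single, Matrix.kroneckerMap_apply]

lemma part1 {n : ℕ} (ρ : Matrix (Fin 2 × Fin n) (Fin 2 × Fin n) ℂ)
    (hpos : ρ.PosSemidef) (htr : ρ.trace = 1) :
    (∑ i : Fin 2, ∑ j : Fin 2, traceNorm (blockOf ρ i j))
      = 1 + traceNorm (ρ - (matUnit (0 : Fin 2) 0 ⊗ₖ blockOf ρ 0 0
          + matUnit (1 : Fin 2) 1 ⊗ₖ blockOf ρ 1 1)) := by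
  have key : ((blockOf ρ 0 0).trace).re + ((blockOf ρ 1 1).trace).re = 1 := by
    rw [← Complex.add_re, trace_blocks, htr]; simp
  rw [decomp, traceNorm_offdiag, Fin.sum_univ_two, Fin.sum_univ_two, Fin.sum_univ_two,
    traceNorm_of_posSemidef (blockOf_psd hpos 0), traceNorm_of_posSemidef (blockOf_psd hpos 1)]
  linarith

lemma blockdiag_as_proj {n : ℕ} (σ : Matrix (Fin 2 × Fin n) (Fin 2 × Fin n) ℂ) :
    matUnit (0 : Fin 2) 0 ⊗ₖ blockOf σ 0 0 + matUnit (1 : Fin 2) 1 ⊗ₖ blockOf σ 1 1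
      = ∑ i : Fin 2, (matUnit i i ⊗ₖ (1 : Matrix (Fin n) (Fin n) ℂ)) * σ *
          (matUnit i i ⊗ₖ (1 : Matrix (Fin n) (Fin n) ℂ)) := by
  rw [Fin.sum_univ_two]
  ext ⟨a, k⟩ ⟨b, l⟩
  fin_cases a <;> fin_cases b <;>
    simp [blockOf, matUnit, Matrix.single, Matrix.kroneckerMap_apply, Matrix.mul_apply,
      Fintype.sum_prod_type, Fin.sum_univ_two, Matrix.one_apply, ite_mul, zero_mul, mul_ite,
      mul_zero]

end helpers3

/-- for a state on `ℂ² ⊗ ℂ^n`, `Σ_{i,j} ‖ρ_{ij}‖₁ = 1 + ‖ρ − Π[ρ]‖₁`,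
where `Π[ρ] = E₀₀ ⊗ ρ₀₀ + E₁₁ ⊗ ρ₁₁`; consequently the one-sided negativity of
quantumness equals the minimal trace-norm disturbance under local qubit dephasing,
up to the factor 1/2. -/
theorem stmt_7 {n : ℕ} (ρ : Matrix (Fin 2 × Fin n) (Fin 2 × Fin n) ℂ)
    (hpos : ρ.PosSemidef) (htr : ρ.trace = 1) :
    (∑ i : Fin 2, ∑ j : Fin 2, traceNorm (blockOf ρ i j))
        = 1 + traceNorm (ρ - (matUnit (0 : Fin 2) 0 ⊗ₖ blockOf ρ 0 0
            + matUnit (1 : Fin 2) 1 ⊗ₖ blockOf ρ 1 1)) ∧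
    QNA ρ = ⨅ U : Matrix.unitaryGroup (Fin 2) ℂ, (1/2) * traceNorm (ρ - dephase U ρ) := by
  refine ⟨part1 ρ hpos htr, ?_⟩
  unfold QNA
  refine iInf_congr fun U => ?_
  set W : Matrix (Fin 2 × Fin n) (Fin 2 × Fin n) ℂ :=
    (U : Matrix (Fin 2) (Fin 2) ℂ) ⊗ₖ (1 : Matrix (Fin n) (Fin n) ℂ) with hW
  have hUstar : ((U : Matrix (Fin 2) (Fin 2) ℂ))ᴴ * U = 1 := by
    simpa [Matrix.star_eq_conjTranspose] using U.2.1
  have hUstar' : (U : Matrix (Fin 2) (Fin 2) ℂ) * (U : Matrix (Fin 2) (Fin 2) ℂ)ᴴ = 1 := by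
    simpa [Matrix.star_eq_conjTranspose] using U.2.2
  have hWH : Wᴴ = (U : Matrix (Fin 2) (Fin 2) ℂ)ᴴ ⊗ₖ (1 : Matrix (Fin n) (Fin n) ℂ) := by
    rw [hW, kron_conjTranspose, Matrix.conjTranspose_one]
  have hW1 : Wᴴ * W = 1 := by
    rw [hWH, hW, ← Matrix.mul_kronecker_mul, hUstar, Matrix.one_mul, Matrix.one_kronecker_one]
  have hW2 : W * Wᴴ = 1 := by
    rw [hWH, hW, ← Matrix.mul_kronecker_mul, hUstar', Matrix.one_mul, Matrix.one_kronecker_one]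
  have hσ : conjU U ρ = Wᴴ * ρ * W := rfl
  have hσpos : (conjU U ρ).PosSemidef := by
    rw [hσ]; exact hpos.conjTranspose_mul_mul_same W
  have hσtr : (conjU U ρ).trace = 1 := by
    rw [hσ, Matrix.trace_mul_comm, ← Matrix.mul_assoc, hW2, Matrix.one_mul, htr]
  rw [part1 _ hσpos hσtr]
  have hkey : W * (conjU U ρ - (matUnit (0 : Fin 2) 0 ⊗ₖ blockOf (conjU U ρ) 0 0
      + matUnit (1 : Fin 2) 1 ⊗ₖ blockOf (conjU U ρ) 1 1)) * Wᴴ = ρ - dephase U ρ := by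
    rw [Matrix.mul_sub, Matrix.sub_mul]
    congr 1
    · rw [hσ, ← Matrix.mul_assoc, ← Matrix.mul_assoc, hW2, Matrix.one_mul,
        Matrix.mul_assoc, hW2, Matrix.mul_one]
    · rw [blockdiag_as_proj, Finset.mul_sum, Finset.sum_mul]
      unfold dephase
      refine Finset.sum_congr rfl fun i _ => ?_
      have hP : W * (matUnit i i ⊗ₖ (1 : Matrix (Fin n) (Fin n) ℂ)) * Wᴴ
          = ((U : Matrix (Fin 2) (Fin 2) ℂ) * matUnit i i * (U : Matrix (Fin 2) (Fin 2) ℂ)ᴴ)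
            ⊗ₖ (1 : Matrix (Fin n) (Fin n) ℂ) := by
        rw [hW, hWH, ← Matrix.mul_kronecker_mul, ← Matrix.mul_kronecker_mul,
          Matrix.one_mul, Matrix.one_mul]
      rw [← hP, hσ]
      simp only [Matrix.mul_assoc]
  have hTN : traceNorm (conjU U ρ - (matUnit (0 : Fin 2) 0 ⊗ₖ blockOf (conjU U ρ) 0 0
      + matUnit (1 : Fin 2) 1 ⊗ₖ blockOf (conjU U ρ) 1 1))
      = traceNorm (ρ - dephase U ρ) := by
    rw [← hkey]; exact (traceNorm_conj _ W hW1).symm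
  rw [hTN]; ring
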